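/- Let w₀ : [0,∞) → [0,∞) satisfy, for some β > 0: w₀ is decreasing (w₀(s) ≤ w₀(t) for s ≥ t), and ∫₀^R w₀(t)t^(n-1)dt ≤ 2β·w₀(R)·R^n/n for all R > 0 (which holds for n > log₂β + 1 when w₀ is essentially constant over dyadic intervals). Then for every interval [a,b] ⊆ [0,∞) with b > 2a: (n/(b^n - a^n))·∫ₐᵇ w₀(t)t^(n-1)dt ≤ 4β · ess inf_{t ∈ [a,b]} w₀(t). -/
import Mathlib


open MeasureTheory

theorem stmt_18 (β : ℝ) (hβ : 0 < β) (w₀ : ℝ → ℝ) (hmeas : Measurable w₀)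
    (hpos : ∀ t, 0 ≤ w₀ t)
    (hdec : ∀ s t : ℝ, 0 ≤ t → t ≤ s → w₀ s ≤ w₀ t)
    (n : ℕ) (hn : 1 ≤ n)
    (hhardy : ∀ R > (0:ℝ), ∫ t in (0:ℝ)..R, w₀ t * t ^ (n - 1) ≤
      2 * β * w₀ R * R ^ n / n)
    (a b : ℝ) (ha : 0 ≤ a) (hb : 2 * a < b) :
    ((n : ℝ) / (b ^ n - a ^ n)) * ∫ t in a..b, w₀ t * t ^ (n - 1) ≤
      4 * β * essInf w₀ (volume.restrict (Set.Icc a b)) := by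
  have hb0 : (0:ℝ) < b := lt_of_le_of_lt (by linarith) hb
  have hab : a < b := by linarith
  have h2an : 2 * a ^ n ≤ b ^ n := by
    calc 2 * a ^ n ≤ 2 ^ n * a ^ n := by
          have h2 : (2:ℝ) ≤ 2 ^ n := by
            calc (2:ℝ) = 2 ^ 1 := (pow_one 2).symm
            _ ≤ 2 ^ n := pow_le_pow_right₀ one_le_two hn
          nlinarith [pow_nonneg ha n]
      _ = (2 * a) ^ n := (mul_pow 2 a n).symm
      _ ≤ b ^ n := pow_le_pow_left₀ (by linarith) hb.le n
  have hban : 0 < b ^ n - a ^ n := by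
    have := pow_pos hb0 n
    linarith
  set f : ℝ → ℝ := fun t => w₀ t * t ^ (n - 1) with hf
  have hfm : Measurable f := hmeas.mul (measurable_id.pow_const _)
  have hint : ∀ c d : ℝ, 0 ≤ c → c ≤ d → IntervalIntegrable f volume c d := by
    intro c d hc hcd
    apply IntervalIntegrable.mono_fun' (g := fun _ : ℝ => w₀ 0 * d ^ (n-1))
    · exact intervalIntegrable_const
    · exact hfm.aestronglyMeasurable
    · refine (ae_restrict_iff' measurableSet_uIoc).mpr (.of_forall fun t ht => ?_)
      rw [Set.uIoc_of_le hcd] at ht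
      have ht0 : 0 ≤ t := le_trans hc ht.1.le
      show ‖w₀ t * t ^ (n-1)‖ ≤ w₀ 0 * d ^ (n-1)
      rw [Real.norm_eq_abs, abs_mul, abs_of_nonneg (hpos t), abs_pow,
        abs_of_nonneg ht0]
      gcongr
      · exact hpos 0
      · exact hdec t 0 le_rfl ht0
      · exact ht.2
  have hfnn : ∀ t : ℝ, 0 ≤ t → 0 ≤ f t := fun t ht =>
    mul_nonneg (hpos t) (pow_nonneg ht _)
  -- ∫ₐᵇ f ≤ ∫₀ᵇ f
  have hsplit : (∫ t in (0:ℝ)..a, f t) + ∫ t in a..b, f t = ∫ t in (0:ℝ)..b, f t :=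
    intervalIntegral.integral_add_adjacent_intervals (hint 0 a le_rfl ha)
      (hint a b ha hab.le)
  have h0a : 0 ≤ ∫ t in (0:ℝ)..a, f t :=
    intervalIntegral.integral_nonneg ha fun t ht => hfnn t ht.1
  have hIle : ∫ t in a..b, f t ≤ ∫ t in (0:ℝ)..b, f t := by linarith
  have hH := hhardy b hb0
  -- essInf bound
  have hess : w₀ b ≤ essInf w₀ (volume.restrict (Set.Icc a b)) := by
    have hne : (ae (volume.restrict (Set.Icc a b))).NeBot := by
      rw [ae_neBot]
      simp only [ne_eq, Measure.restrict_eq_zero]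
      rw [Real.volume_Icc]
      intro h
      rw [ENNReal.ofReal_eq_zero] at h
      linarith
    have hev : ∀ᵐ t ∂(volume.restrict (Set.Icc a b)), w₀ b ≤ w₀ t := by
      refine (ae_restrict_iff' measurableSet_Icc).mpr (.of_forall fun t ht => ?_)
      exact hdec b t (le_trans ha ht.1) ht.2
    exact Filter.le_liminf_of_le
      (Filter.isCoboundedUnder_ge_of_eventually_le _
        ((ae_restrict_iff' measurableSet_Icc).mpr (.of_forall fun t ht =>
          hdec t 0 le_rfl (le_trans ha ht.1)))) hev
  have hwb : 0 ≤ w₀ b := hpos b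
  calc ((n : ℝ) / (b ^ n - a ^ n)) * ∫ t in a..b, f t
      ≤ ((n : ℝ) / (b ^ n - a ^ n)) * (2 * β * w₀ b * b ^ n / n) := by
        apply mul_le_mul_of_nonneg_left (le_trans hIle hH)
        positivity
    _ ≤ 4 * β * w₀ b := by
        have hn0 : (0:ℝ) < n := by exact_mod_cast hn
        rw [div_mul_eq_mul_div, div_le_iff₀ hban]
        have heq : (n:ℝ) * (2 * β * w₀ b * b ^ n / n) = 2 * β * w₀ b * b ^ n := by
          field_simp
        rw [heq]
        nlinarith [mul_nonneg hβ.le hwb]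
    _ ≤ 4 * β * essInf w₀ (volume.restrict (Set.Icc a b)) := by
        have : (0:ℝ) ≤ 4 * β := by linarith
        exact mul_le_mul_of_nonneg_left hess this
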